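/- For r ≥ 3, let F be a random r-SAT formula on n variables where each of the 2^r·C(n,r) possible clauses appears independently with probability p = α·n^{-(r-1)}. For 1 ≤ t ≤ n/(2α^{1/(r-1)}), the probability that F contains a full subformula on exactly t variables is at most ((4^{(r-1)/r}·e·α^{2/r})·(t/n)^{1-2/r})^t. -/

import Mathlib

open MeasureTheory ENNReal

/-- A (valid) `r`-clause on the variable set `Fin n`: a set of `r` literals on
`r` distinct variables. -/
abbrev Clause (n r : ℕ) : Type :=
  {c : Finset (Fin n × Bool) // c.card = r ∧ (c.image Prod.fst).card = r}

/-- The random `r`-SAT model `F^r_{n,p}`: each of the `2^r·C(n,r)` possible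
clauses is present independently with probability `p`; a sample point records
which clauses are present. -/
noncomputable def randomFormula (n r : ℕ) (p : ℝ≥0∞) (hp : p ≤ 1) :
    Measure (Clause n r → Bool) :=
  Measure.pi fun _ => (PMF.bernoulli p.toNNReal (by simpa using ENNReal.toNNReal_mono ENNReal.one_ne_top hp)).toMeasure

namespace FullSub
open Finset

variable {β : Type*} [DecidableEq β]

/-- one greedy step: insert the chosen uncovered element of `L \ R` into `a`. -/
noncomputable def nxt (L R a : Finset β) : Finset β :=
  if h : (L \ R).Nonempty then insert h.choose a else ∅

/-- covered elements after `i` steps. -/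
noncomputable def cov (L : Finset β) (A : ℕ → Finset β) : ℕ → Finset β
  | 0 => ∅
  | i + 1 => cov L A i ∪ nxt L (cov L A i) (A i)

/-- the `i`-th decoded clause. -/
noncomputable def dec (L : Finset β) (A : ℕ → Finset β) (i : ℕ) : Finset β :=
  nxt L (cov L A i) (A i)

lemma cov_succ (L : Finset β) (A : ℕ → Finset β) (i : ℕ) :
    cov L A (i + 1) = cov L A i ∪ dec L A i := rfl

lemma cov_congr (L : Finset β) {A B : ℕ → Finset β} :
    ∀ i : ℕ, (∀ j < i, A j = B j) → cov L A i = cov L B i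
  | 0, _ => rfl
  | i + 1, h => by
      have hi := cov_congr L i (fun j hj => h j (Nat.lt_succ_of_lt hj))
      simp only [cov, hi, h i (Nat.lt_succ_self i)]

lemma dec_congr (L : Finset β) {A B : ℕ → Finset β} (i : ℕ)
    (h : ∀ j ≤ i, A j = B j) : dec L A i = dec L B i := by
  unfold dec
  rw [cov_congr L i (fun j hj => h j hj.le), h i le_rfl]

lemma cov_mono (L : Finset β) (A : ℕ → Finset β) {i j : ℕ} (h : i ≤ j) :
    cov L A i ⊆ cov L A j := by
  induction j with
  | zero => simp [Nat.le_zero.mp h]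
  | succ j ih =>
    rcases Nat.lt_succ_iff_lt_or_eq.mp (Nat.lt_succ_of_le h) with h' | h'
    · exact (ih (Nat.le_of_lt_succ h')).trans subset_union_left
    · exact h' ▸ le_rfl

lemma dec_subset_cov_succ (L : Finset β) (A : ℕ → Finset β) (i : ℕ) :
    dec L A i ⊆ cov L A (i + 1) := by
  rw [cov_succ]; exact subset_union_right

lemma card_nxt (L R a : Finset β) : (nxt L R a).card ≤ a.card + 1 := by
  unfold nxt
  split
  · exact card_insert_le _ _
  · simp

lemma card_cov (L : Finset β) (A : ℕ → Finset β) (m : ℕ) :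
    ∀ i : ℕ, (∀ j < i, (A j).card ≤ m) → (cov L A i).card ≤ i * (m + 1)
  | 0, _ => by simp [cov]
  | i + 1, h => by
      have h1 : (cov L A i).card ≤ i * (m + 1) :=
        card_cov L A m i (fun j hj => h j (Nat.lt_succ_of_lt hj))
      have h2 : (dec L A i).card ≤ m + 1 :=
        (card_nxt _ _ _).trans (by
          have := h i (Nat.lt_succ_self i); omega)
      calc (cov L A (i + 1)).card ≤ (cov L A i).card + (dec L A i).card :=
            card_union_le _ _
        _ ≤ (i + 1) * (m + 1) := by nlinarith

lemma rem_nonempty {L R : Finset β} (h : R.card < L.card) : (L \ R).Nonempty := by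
  rw [Finset.sdiff_nonempty]
  intro hsub
  exact absurd (Finset.card_le_card hsub) (by omega)

lemma fresh {L R : Finset β} (h : (L \ R).Nonempty) (a : Finset β) :
    ∃ l, l ∈ nxt L R a ∧ l ∉ R ∧ l ∈ L := by
  refine ⟨h.choose, ?_, ?_, ?_⟩
  · unfold nxt; rw [dif_pos h]; exact mem_insert_self _ _
  · exact (Finset.mem_sdiff.mp h.choose_spec).2
  · exact (Finset.mem_sdiff.mp h.choose_spec).1

lemma dec_ne {L : Finset β} {A : ℕ → Finset β} {i j : ℕ}
    (h : (L \ cov L A i).Nonempty) (hj : j < i) : dec L A i ≠ dec L A j := by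
  obtain ⟨l, hl, hlc, -⟩ := fresh h (A i)
  intro heq
  have : l ∈ cov L A i := by
    have h1 : dec L A j ⊆ cov L A (j + 1) := dec_subset_cov_succ L A j
    have h2 : cov L A (j + 1) ⊆ cov L A i := cov_mono L A hj
    exact h2 (h1 (heq ▸ hl))
  exact hlc this

end FullSub

section Aux
open Finset

namespace FullSub

lemma exists_witness {n r t s : ℕ} (hr : 1 ≤ r)
    (V : Finset (Fin n)) (hV : V.card = t)
    (S : Finset (Clause n r))
    (hvar : ∀ c ∈ S, ∀ l ∈ c.val, l.1 ∈ V)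
    (hfull : ∀ v ∈ V, ∀ b : Bool, ∃ c ∈ S, (v, b) ∈ c.val)
    (hs : (s - 1) * r < 2 * t) :
    ∃ A : ℕ → Finset (Fin n × Bool),
      (∀ i < s, A i ∈ (V ×ˢ Finset.univ).powersetCard (r - 1)) ∧
      (∀ i < s, ∃ c ∈ S, dec (V ×ˢ Finset.univ) A i = c.val) := by
  classical
  set L : Finset (Fin n × Bool) := V ×ˢ Finset.univ with hLdef
  have hL : L.card = 2 * t := by
    simp [hLdef, Finset.card_product, hV, Nat.mul_comm]
  have hcsub : ∀ c ∈ S, c.val ⊆ L := by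
    intro c hc x hx
    exact Finset.mem_product.mpr ⟨hvar c hc x hx, Finset.mem_univ _⟩
  suffices h : ∀ k, k ≤ s → ∃ A : ℕ → Finset (Fin n × Bool),
      (∀ i < k, A i ∈ L.powersetCard (r - 1)) ∧
      (∀ i < k, ∃ c ∈ S, dec L A i = c.val) from h s le_rfl
  intro k
  induction k with
  | zero => exact fun _ => ⟨fun _ => ∅, by omega, by omega⟩
  | succ k ih =>
    intro hk
    obtain ⟨A, hA1, hA2⟩ := ih (by omega)
    -- the remainder is nonempty
    have hcovcard : (cov L A k).card ≤ k * r := by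
      have := card_cov L A (r - 1) k (fun j hj => by
        have := (Finset.mem_powersetCard.mp (hA1 j hj)).2
        omega)
      have hr1 : r - 1 + 1 = r := by omega
      rwa [hr1] at this
    have hne : (L \ cov L A k).Nonempty := by
      apply rem_nonempty
      have hks : k ≤ s - 1 := by omega
      calc (cov L A k).card ≤ k * r := hcovcard
        _ ≤ (s - 1) * r := Nat.mul_le_mul_right r hks
        _ < 2 * t := hs
        _ = L.card := hL.symm
    set l := hne.choose with hldef
    have hlL : l ∈ L := (Finset.mem_sdiff.mp hne.choose_spec).1
    have hl1 : l.1 ∈ V := (Finset.mem_product.mp hlL).1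
    obtain ⟨c, hcS, hlc⟩ := hfull l.1 hl1 l.2
    have hlc' : l ∈ c.val := by rwa [Prod.mk.eta] at hlc
    refine ⟨Function.update A k (c.val.erase l), ?_, ?_⟩
    · intro i hi
      rcases Nat.lt_succ_iff_lt_or_eq.mp hi with hi' | hi'
      · rw [Function.update_of_ne (by omega)]
        exact hA1 i hi'
      · subst hi'
        rw [Function.update_self]
        refine Finset.mem_powersetCard.mpr ⟨(Finset.erase_subset _ _).trans (hcsub c hcS), ?_⟩
        rw [Finset.card_erase_of_mem hlc', c.prop.1]
    · intro i hi
      rcases Nat.lt_succ_iff_lt_or_eq.mp hi with hi' | hi'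
      · obtain ⟨c', hc', hd⟩ := hA2 i hi'
        refine ⟨c', hc', ?_⟩
        rw [← hd]
        exact dec_congr L i (fun j hj => Function.update_of_ne (by omega) _ _)
      · subst hi'
        refine ⟨c, hcS, ?_⟩
        have hcov : cov L (Function.update A i (c.val.erase l)) i = cov L A i :=
          cov_congr L i (fun j hj => Function.update_of_ne (by omega) _ _)
        unfold dec nxt
        rw [hcov, Function.update_self, dif_pos hne, ← hldef,
          Finset.insert_erase hlc']

end FullSub

open MeasureTheory in
lemma meas_all_true {n r : ℕ} (p : ℝ≥0∞) (hp1 : p ≤ 1) (T : Finset (Clause n r)) :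
    randomFormula n r p hp1 {ω | ∀ c ∈ T, ω c = true} = p ^ T.card := by
  classical
  have hset : {ω : Clause n r → Bool | ∀ c ∈ T, ω c = true} =
      Set.pi Set.univ (fun c => if c ∈ T then ({true} : Set Bool) else Set.univ) := by
    ext ω
    simp only [Set.mem_setOf_eq, Set.mem_pi, Set.mem_univ, forall_true_left]
    constructor
    · intro h c
      split
      · next hc => simp [h c hc]
      · trivial
    · intro h c hc
      have := h c
      rw [if_pos hc] at this
      simpa using this
  rw [randomFormula, hset, MeasureTheory.Measure.pi_pi]
  have hb : ((PMF.bernoulli p.toNNReal (by simpa using ENNReal.toNNReal_mono ENNReal.one_ne_top hp1)).toMeasure) ({true} : Set Bool) = p := by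
    rw [PMF.toMeasure_apply_singleton _ _ (measurableSet_singleton _)]
    exact ENNReal.coe_toNNReal (ne_top_of_le_ne_top ENNReal.one_ne_top hp1)
  have hu : ((PMF.bernoulli p.toNNReal (by simpa using ENNReal.toNNReal_mono ENNReal.one_ne_top hp1)).toMeasure) (Set.univ : Set Bool) = 1 :=
    MeasureTheory.measure_univ
  calc (∏ c : Clause n r,
          (PMF.bernoulli p.toNNReal (by simpa using ENNReal.toNNReal_mono ENNReal.one_ne_top hp1)).toMeasure (if c ∈ T then ({true} : Set Bool) else Set.univ))
      = ∏ c : Clause n r, (if c ∈ T then p else 1) := by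
        refine Finset.prod_congr rfl (fun c _ => ?_)
        split
        · exact hb
        · exact hu
    _ = ∏ _c ∈ T, p := by rw [Finset.prod_ite_mem, Finset.univ_inter]
    _ = p ^ T.card := Finset.prod_const p

lemma real_bound {n r t s : ℕ} (hr : 3 ≤ r) (ht1 : 1 ≤ t) (hn : 1 ≤ n) {α : ℝ} (hα : 0 < α)
    (ht2 : (t : ℝ) ≤ n / (2 * α ^ ((1 : ℝ) / ((r : ℝ) - 1))))
    (hs2 : 2 * t ≤ r * s) :
    (n.choose t : ℝ) * (((2 * t).choose (r - 1) : ℝ) ^ s * (α / (n : ℝ) ^ (r - 1)) ^ s) ≤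
      ((4 : ℝ) ^ (((r : ℝ) - 1) / (r : ℝ)) * Real.exp 1 * α ^ ((2 : ℝ) / (r : ℝ)) *
        ((t : ℝ) / (n : ℝ)) ^ (1 - 2 / (r : ℝ))) ^ t := by
  have hn0 : (0:ℝ) < n := by exact_mod_cast hn
  have ht0 : (0:ℝ) < t := by exact_mod_cast ht1
  have hr0 : (0:ℝ) < r := by positivity
  have hr3 : (3:ℝ) ≤ r := by exact_mod_cast hr
  have hr1 : (r:ℝ) - 1 ≠ 0 := by nlinarith
  have hcast : ((r - 1 : ℕ) : ℝ) = (r:ℝ) - 1 := by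
    rw [Nat.cast_sub (by omega)]; norm_num
  set x : ℝ := (t:ℝ) / n with hxdef
  have hx0 : (0:ℝ) < x := by positivity
  set q : ℝ := α * ((2*t : ℝ)/n) ^ (r - 1) with hqdef
  have hq0 : 0 < q := by positivity
  -- q ≤ 1
  have hβ : (0:ℝ) < α ^ ((1:ℝ)/((r:ℝ)-1)) := Real.rpow_pos_of_pos hα _
  have hβpow : (α ^ ((1:ℝ)/((r:ℝ)-1))) ^ (r - 1 : ℕ) = α := by
    rw [← Real.rpow_natCast (α ^ ((1:ℝ)/((r:ℝ)-1))) (r-1), ← Real.rpow_mul hα.le, hcast,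
      one_div, inv_mul_cancel₀ hr1, Real.rpow_one]
  have hq1 : q ≤ 1 := by
    have h2t : (2*t:ℝ) * α ^ ((1:ℝ)/((r:ℝ)-1)) ≤ n := by
      rw [le_div_iff₀ (by positivity)] at ht2
      nlinarith
    have hfrac : (2*t:ℝ)/n ≤ (α ^ ((1:ℝ)/((r:ℝ)-1)))⁻¹ := by
      rw [div_le_iff₀ hn0, inv_mul_eq_div, le_div_iff₀ hβ]
      linarith
    have hpow : ((2*t:ℝ)/n) ^ (r-1) ≤ ((α ^ ((1:ℝ)/((r:ℝ)-1)))⁻¹) ^ (r-1) :=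
      pow_le_pow_left₀ (by positivity) hfrac _
    calc q ≤ α * ((α ^ ((1:ℝ)/((r:ℝ)-1)))⁻¹) ^ (r-1) :=
          mul_le_mul_of_nonneg_left hpow hα.le
      _ = α * α⁻¹ := by rw [inv_pow, hβpow]
      _ = 1 := mul_inv_cancel₀ hα.ne'
  -- choose bounds
  have hC1 : (n.choose t : ℝ) ≤ (Real.exp 1 * n / t) ^ t := by
    have h1 : (n.choose t : ℝ) ≤ (n:ℝ) ^ t / (t.factorial : ℝ) := Nat.choose_le_pow_div t n
    have h2 : (t:ℝ) ^ t / (t.factorial : ℝ) ≤ Real.exp 1 ^ t := by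
      rw [Real.exp_one_pow]
      exact Real.pow_div_factorial_le_exp (hx := ht0.le) (n := t)
    have hfac : (0:ℝ) < (t.factorial : ℝ) := by exact_mod_cast t.factorial_pos
    have h3 : (t:ℝ) ^ t ≤ Real.exp 1 ^ t * (t.factorial : ℝ) := by
      rw [div_le_iff₀ hfac] at h2; exact h2
    refine h1.trans ?_
    rw [div_pow, mul_pow, div_le_div_iff₀ hfac (by positivity)]
    calc (n:ℝ) ^ t * (t:ℝ) ^ t ≤ (n:ℝ) ^ t * (Real.exp 1 ^ t * (t.factorial : ℝ)) :=
          mul_le_mul_of_nonneg_left h3 (by positivity)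
      _ = Real.exp 1 ^ t * (n:ℝ) ^ t * (t.factorial : ℝ) := by ring
  have hC2 : (((2 * t).choose (r - 1) : ℕ) : ℝ) ≤ ((2*t : ℝ)) ^ (r-1) := by
    have := Nat.choose_le_pow (2*t) (r-1)
    exact_mod_cast this
  have hkey : ((2*t : ℝ)) ^ (r-1) * (α / (n : ℝ) ^ (r - 1)) = q := by
    rw [hqdef, div_pow]; ring
  -- main chain
  have hπ0 : (0:ℝ) ≤ α / (n : ℝ) ^ (r - 1) := by positivity
  have step1 : (n.choose t : ℝ) * (((2 * t).choose (r - 1) : ℝ) ^ s *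
      (α / (n : ℝ) ^ (r - 1)) ^ s) ≤ (Real.exp 1 * n / t) ^ t * q ^ s := by
    rw [← hkey, mul_pow]
    have hfac2 : ((2 * t).choose (r - 1) : ℝ) ^ s ≤ ((2*t : ℝ) ^ (r-1)) ^ s :=
      pow_le_pow_left₀ (by positivity) hC2 s
    have : (((2 * t).choose (r - 1) : ℝ) ^ s * (α / (n : ℝ) ^ (r - 1)) ^ s) ≤
        ((2*t : ℝ) ^ (r-1)) ^ s * (α / (n : ℝ) ^ (r - 1)) ^ s :=
      mul_le_mul_of_nonneg_right hfac2 (by positivity)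
    exact mul_le_mul hC1 this (by positivity) (by positivity)
  have step2 : q ^ s ≤ q ^ (2 * (t:ℝ) / (r:ℝ)) := by
    rw [← Real.rpow_natCast q s]
    apply Real.rpow_le_rpow_of_exponent_ge hq0 hq1
    rw [div_le_iff₀ hr0]
    have : (2 * t : ℝ) ≤ (r * s : ℝ) := by exact_mod_cast hs2
    nlinarith
  have step3 : (Real.exp 1 * n / t) ^ t * q ^ (2 * (t:ℝ) / (r:ℝ)) =
      ((4 : ℝ) ^ (((r : ℝ) - 1) / (r : ℝ)) * Real.exp 1 * α ^ ((2 : ℝ) / (r : ℝ)) *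
        ((t : ℝ) / (n : ℝ)) ^ (1 - 2 / (r : ℝ))) ^ t := by
    have hsplit : q ^ (2 * (t:ℝ) / (r:ℝ)) = (q ^ ((2:ℝ)/(r:ℝ))) ^ t := by
      rw [← Real.rpow_natCast (q ^ ((2:ℝ)/(r:ℝ))) t, ← Real.rpow_mul hq0.le]
      congr 1; ring
    rw [hsplit, ← mul_pow]
    congr 1
    have h2x : (0:ℝ) ≤ 2 * x := by positivity
    have hE : (((2*x) ^ (r-1 : ℕ)) : ℝ) ^ ((2:ℝ)/(r:ℝ)) =
        2 ^ (((r:ℝ)-1)*(2/(r:ℝ))) * x ^ (((r:ℝ)-1)*(2/(r:ℝ))) := by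
      rw [← Real.rpow_natCast (2*x) (r-1), hcast, ← Real.rpow_mul h2x,
        Real.mul_rpow (by norm_num) hx0.le]
    have hqx : q = α * (2*x) ^ (r-1 : ℕ) := by
      rw [hqdef, hxdef, mul_div_assoc]
    have hq2r : q ^ ((2:ℝ)/(r:ℝ)) =
        α ^ ((2:ℝ)/(r:ℝ)) * (2 ^ (((r:ℝ)-1)*(2/(r:ℝ))) * x ^ (((r:ℝ)-1)*(2/(r:ℝ)))) := by
      rw [hqx, Real.mul_rpow hα.le (by positivity), hE]
    have h22 : (2:ℝ) ^ (2:ℝ) = 4 := by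
      rw [show (2:ℝ) = ((2:ℕ) : ℝ) by norm_num, Real.rpow_natCast]; norm_num
    have h4 : (4:ℝ) ^ (((r:ℝ)-1)/(r:ℝ)) = 2 ^ (((r:ℝ)-1)*(2/(r:ℝ))) := by
      rw [← h22, ← Real.rpow_mul (by norm_num : (0:ℝ) ≤ 2)]
      congr 1; ring
    have hxE : x ^ (1 - 2/(r:ℝ)) = x⁻¹ * x ^ (((r:ℝ)-1)*(2/(r:ℝ))) := by
      rw [show (1 - 2/(r:ℝ)) = ((r:ℝ)-1)*(2/(r:ℝ)) - 1 by field_simp; ring,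
        Real.rpow_sub hx0, Real.rpow_one]
      ring
    have hnt : Real.exp 1 * (n:ℝ) / t = Real.exp 1 * x⁻¹ := by
      rw [hxdef, inv_div, mul_div_assoc]
    rw [hq2r, h4, hxE, hnt]
    ring
  calc (n.choose t : ℝ) * (((2 * t).choose (r - 1) : ℝ) ^ s * (α / (n : ℝ) ^ (r - 1)) ^ s)
      ≤ (Real.exp 1 * n / t) ^ t * q ^ s := step1
    _ ≤ (Real.exp 1 * n / t) ^ t * q ^ (2 * (t:ℝ) / (r:ℝ)) :=
        mul_le_mul_of_nonneg_left step2 (by positivity)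
    _ = _ := step3

namespace FullSub

def extend {β : Type*} (s : ℕ) (A : Fin s → Finset β) (i : ℕ) : Finset β :=
  if h : i < s then A ⟨i, h⟩ else ∅

lemma extend_lt {β : Type*} {s : ℕ} (A : Fin s → Finset β) {i : ℕ} (h : i < s) :
    extend s A i = A ⟨i, h⟩ := dif_pos h

lemma le_card_T {n r t s : ℕ} (hr : 1 ≤ r) (hts : (s - 1) * r < 2 * t)
    (V : Finset (Fin n)) (hV : V.card = t)
    {A : ℕ → Finset (Fin n × Bool)}
    (hA : ∀ i < s, A i ∈ (V ×ˢ Finset.univ).powersetCard (r - 1))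
    (hgood : ∀ i < s, ∃ c : Clause n r, dec (V ×ˢ Finset.univ) A i = c.val)
    (T : Finset (Clause n r))
    (hT : ∀ c : Clause n r, (∃ i < s, dec (V ×ˢ Finset.univ) A i = c.val) → c ∈ T) :
    s ≤ T.card := by
  classical
  set L : Finset (Fin n × Bool) := V ×ˢ Finset.univ with hLdef
  have hLcard : L.card = 2 * t := by
    simp [hLdef, Finset.card_product, hV, Nat.mul_comm]
  have hrem : ∀ i < s, (L \ cov L A i).Nonempty := by
    intro i hi
    apply rem_nonempty
    have h1 : (cov L A i).card ≤ i * r := by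
      have := card_cov L A (r - 1) i (fun j hj =>
        le_of_eq (Finset.mem_powersetCard.mp (hA j (hj.trans hi))).2)
      have hr1 : r - 1 + 1 = r := by omega
      rwa [hr1] at this
    have hi1 : i ≤ s - 1 := by omega
    calc (cov L A i).card ≤ i * r := h1
      _ ≤ (s - 1) * r := Nat.mul_le_mul_right r hi1
      _ < 2 * t := hts
      _ = L.card := hLcard.symm
  have hinj : Set.InjOn (dec L A) (Finset.range s : Finset ℕ) := by
    intro i hi j hj hij
    simp only [Finset.coe_range, Set.mem_Iio] at hi hj
    rcases lt_trichotomy i j with h | h | h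
    · exact absurd hij.symm (dec_ne (hrem j hj) h)
    · exact h
    · exact absurd hij (dec_ne (hrem i hi) h)
  have h1 : ((Finset.range s).image (dec L A)).card = s := by
    rw [Finset.card_image_of_injOn hinj, Finset.card_range]
  have h2 : (Finset.range s).image (dec L A) ⊆ T.image Subtype.val := by
    intro x hx
    obtain ⟨i, hi, rfl⟩ := Finset.mem_image.mp hx
    have his := Finset.mem_range.mp hi
    obtain ⟨c, hc⟩ := hgood i his
    exact Finset.mem_image.mpr ⟨c, hT c ⟨i, his, hc⟩, hc.symm⟩
  calc s = ((Finset.range s).image (dec L A)).card := h1.symm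
    _ ≤ (T.image Subtype.val).card := Finset.card_le_card h2
    _ = T.card := Finset.card_image_of_injective _ Subtype.val_injective

open Classical in
noncomputable def goodSet (n r s : ℕ) (V : Finset (Fin n)) :
    Finset (Fin s → Finset (Fin n × Bool)) :=
  (Fintype.piFinset fun _ : Fin s => (V ×ˢ Finset.univ).powersetCard (r - 1)).filter
    (fun A => ∀ i < s, ∃ c : Clause n r, dec (V ×ˢ Finset.univ) (extend s A) i = c.val)

def Ev (n r s : ℕ) (V : Finset (Fin n)) (A : Fin s → Finset (Fin n × Bool)) :
    Set (Clause n r → Bool) :=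
  {ω | ∀ c : Clause n r,
    (∃ i < s, dec (V ×ˢ Finset.univ) (extend s A) i = c.val) → ω c = true}

lemma measure_Ev_le {n r t s : ℕ} (hr : 1 ≤ r) (hts : (s - 1) * r < 2 * t)
    (p : ℝ≥0∞) (hp1 : p ≤ 1) (V : Finset (Fin n)) (hV : V.card = t)
    (A : Fin s → Finset (Fin n × Bool)) (hA : A ∈ goodSet n r s V) :
    randomFormula n r p hp1 (Ev n r s V A) ≤ p ^ s := by
  classical
  rw [goodSet, Finset.mem_filter] at hA
  obtain ⟨hA1, hA2⟩ := hA
  set T : Finset (Clause n r) := Finset.univ.filter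
    (fun c => ∃ i < s, dec (V ×ˢ Finset.univ) (extend s A) i = c.val) with hTdef
  have hEv : Ev n r s V A = {ω | ∀ c ∈ T, ω c = true} := by
    unfold Ev
    ext ω
    simp only [Set.mem_setOf_eq, hTdef, Finset.mem_filter, Finset.mem_univ, true_and]
  rw [hEv, meas_all_true]
  have hAmem : ∀ i < s, extend s A i ∈ (V ×ˢ Finset.univ).powersetCard (r - 1) := by
    intro i hi
    rw [extend_lt A hi]
    exact Fintype.mem_piFinset.mp hA1 _
  have hsT : s ≤ T.card := by
    refine le_card_T hr hts V hV hAmem hA2 T ?_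
    intro c hc
    exact Finset.mem_filter.mpr ⟨Finset.mem_univ _, hc⟩
  exact pow_le_pow_of_le_one zero_le hp1 hsT

end FullSub


end Aux

open FullSub Finset in
/-- For `r ≥ 3`, `p = α·n^{-(r-1)}` and `1 ≤ t ≤ n/(2α^{1/(r-1)})`, the
probability that a random formula `F ∈ F^r_{n,p}` contains a full subformula
on exactly `t` variables is at most
`((4^{(r-1)/r}·e·α^{2/r})·(t/n)^{1-2/r})^t`. -/
theorem prob_full_subformula_le (n r t : ℕ) (hr : 3 ≤ r) (α : ℝ) (hα : 0 < α)
    (p : ℝ≥0∞) (hp : p = ENNReal.ofReal (α / (n : ℝ) ^ (r - 1))) (hp1 : p ≤ 1)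
    (ht1 : 1 ≤ t) (ht2 : (t : ℝ) ≤ n / (2 * α ^ ((1 : ℝ) / ((r : ℝ) - 1)))) :
    randomFormula n r p hp1
      {ω | ∃ V : Finset (Fin n), V.card = t ∧
        ∃ S : Finset (Clause n r),
          S.Nonempty ∧ (∀ c ∈ S, ω c = true) ∧
          (∀ c ∈ S, ∀ l ∈ c.val, l.1 ∈ V) ∧
          (∀ v ∈ V, ∀ b : Bool, ∃ c ∈ S, (v, b) ∈ c.val)} ≤
    ENNReal.ofReal
      (((4 : ℝ) ^ (((r : ℝ) - 1) / (r : ℝ)) * Real.exp 1 * α ^ ((2 : ℝ) / (r : ℝ)) *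
        ((t : ℝ) / (n : ℝ)) ^ (1 - 2 / (r : ℝ))) ^ t) := by
  classical
  -- the number of clauses in a canonical witness
  set s : ℕ := (2 * t - 1) / r + 1 with hsdef
  have hsub1 : s - 1 = (2 * t - 1) / r := by simp [hsdef]
  have hslt : (s - 1) * r < 2 * t := by
    rw [hsub1]
    exact lt_of_le_of_lt (Nat.div_mul_le_self _ _) (by omega)
  have hs2 : 2 * t ≤ r * s := by
    have h := Nat.div_add_mod (2 * t - 1) r
    have h2 : (2 * t - 1) % r < r := Nat.mod_lt _ (by omega)
    have h3 : r * s = r * ((2 * t - 1) / r) + r := by rw [hsdef, Nat.mul_add, Nat.mul_one]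
    calc 2 * t = (2 * t - 1) + 1 := by omega
      _ = (r * ((2 * t - 1) / r) + (2 * t - 1) % r) + 1 := by rw [h]
      _ = r * ((2 * t - 1) / r) + ((2 * t - 1) % r + 1) := by rw [Nat.add_assoc]
      _ ≤ r * ((2 * t - 1) / r) + r := Nat.add_le_add_left (Nat.succ_le_of_lt h2) _
      _ = r * s := h3.symm
  have hn : 1 ≤ n := by
    by_contra h
    push_neg at h
    have hn0 : n = 0 := by omega
    rw [hn0] at ht2
    simp only [Nat.cast_zero, zero_div] at ht2
    have h1 : (1:ℝ) ≤ (t:ℝ) := by exact_mod_cast ht1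
    linarith
  set P : Finset (Finset (Fin n)) := Finset.powersetCard t Finset.univ with hPdef
  -- inclusion into the union of decoded-witness events
  have hsub : {ω : Clause n r → Bool | ∃ V : Finset (Fin n), V.card = t ∧
        ∃ S : Finset (Clause n r),
          S.Nonempty ∧ (∀ c ∈ S, ω c = true) ∧
          (∀ c ∈ S, ∀ l ∈ c.val, l.1 ∈ V) ∧
          (∀ v ∈ V, ∀ b : Bool, ∃ c ∈ S, (v, b) ∈ c.val)} ⊆
      ⋃ V ∈ P, ⋃ A ∈ goodSet n r s V, Ev n r s V A := by
    rintro ω ⟨V, hV, S, -, hpres, hvar, hfull⟩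
    obtain ⟨AW, hA1, hA2⟩ := exists_witness (by omega) V hV S hvar hfull hslt
    refine Set.mem_iUnion₂.mpr ⟨V, ?_, ?_⟩
    · rw [hPdef, Finset.mem_powersetCard_univ]; exact hV
    set A : Fin s → Finset (Fin n × Bool) := fun i => AW i with hAdef
    have hext : ∀ i < s, extend s A i = AW i := by
      intro i hi
      rw [extend_lt A hi]
    have hdec : ∀ i < s, dec (V ×ˢ Finset.univ) (extend s A) i =
        dec (V ×ˢ Finset.univ) AW i := by
      intro i hi
      exact dec_congr _ i (fun j hj => hext j (lt_of_le_of_lt hj hi))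
    refine Set.mem_iUnion₂.mpr ⟨A, ?_, ?_⟩
    · rw [goodSet, Finset.mem_filter]
      constructor
      · rw [Fintype.mem_piFinset]
        exact fun i => hA1 i i.2
      · intro i hi
        obtain ⟨c, hcS, hd⟩ := hA2 i hi
        exact ⟨c, by rw [hdec i hi, hd]⟩
    · intro c hc
      obtain ⟨i, hi, hd⟩ := hc
      obtain ⟨c', hc'S, hd'⟩ := hA2 i hi
      have : c = c' := by
        apply Subtype.ext
        rw [← hd, hdec i hi, hd']
      exact this ▸ hpres c' hc'S
  -- union bound
  have hbound : randomFormula n r p hp1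
      {ω : Clause n r → Bool | ∃ V : Finset (Fin n), V.card = t ∧
        ∃ S : Finset (Clause n r),
          S.Nonempty ∧ (∀ c ∈ S, ω c = true) ∧
          (∀ c ∈ S, ∀ l ∈ c.val, l.1 ∈ V) ∧
          (∀ v ∈ V, ∀ b : Bool, ∃ c ∈ S, (v, b) ∈ c.val)} ≤
      (n.choose t : ℝ≥0∞) * (((2 * t).choose (r - 1) : ℝ≥0∞) ^ s * p ^ s) := by
    calc randomFormula n r p hp1 _
        ≤ randomFormula n r p hp1 (⋃ V ∈ P, ⋃ A ∈ goodSet n r s V, Ev n r s V A) :=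
          measure_mono hsub
      _ ≤ ∑ V ∈ P, randomFormula n r p hp1 (⋃ A ∈ goodSet n r s V, Ev n r s V A) :=
          measure_biUnion_finset_le P _
      _ ≤ ∑ V ∈ P, ∑ A ∈ goodSet n r s V, randomFormula n r p hp1 (Ev n r s V A) :=
          Finset.sum_le_sum (fun V _ => measure_biUnion_finset_le _ _)
      _ ≤ ∑ V ∈ P, ∑ _A ∈ goodSet n r s V, p ^ s := by
          refine Finset.sum_le_sum (fun V hVP => Finset.sum_le_sum (fun A hA => ?_))
          have hVt : V.card = t := (Finset.mem_powersetCard_univ.mp hVP)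
          exact measure_Ev_le (by omega) hslt p hp1 V hVt A hA
      _ = ∑ V ∈ P, ((goodSet n r s V).card : ℝ≥0∞) * p ^ s := by
          refine Finset.sum_congr rfl (fun V _ => ?_)
          rw [Finset.sum_const, nsmul_eq_mul]
      _ ≤ ∑ V ∈ P, (((2 * t).choose (r - 1) : ℝ≥0∞) ^ s * p ^ s) := by
          refine Finset.sum_le_sum (fun V hVP => ?_)
          have hVt : V.card = t := Finset.mem_powersetCard_univ.mp hVP
          have hLc : (V ×ˢ (Finset.univ : Finset Bool)).card = 2 * t := by
            simp [Finset.card_product, hVt, Nat.mul_comm]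
          have hcard : (goodSet n r s V).card ≤ ((2 * t).choose (r - 1)) ^ s := by
            calc (goodSet n r s V).card
                ≤ (Fintype.piFinset fun _ : Fin s =>
                    (V ×ˢ Finset.univ).powersetCard (r - 1)).card :=
                  Finset.card_filter_le _ _
              _ = ((2 * t).choose (r - 1)) ^ s := by
                  rw [Fintype.card_piFinset]
                  simp [Finset.card_powersetCard, Finset.card_product, hVt, Nat.mul_comm]
          refine mul_le_mul_left ?_ (p ^ s)
          calc ((goodSet n r s V).card : ℝ≥0∞)
              ≤ ((((2 * t).choose (r - 1)) ^ s : ℕ) : ℝ≥0∞) := by exact_mod_cast hcard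
            _ = ((2 * t).choose (r - 1) : ℝ≥0∞) ^ s := by push_cast; ring
      _ = (n.choose t : ℝ≥0∞) * (((2 * t).choose (r - 1) : ℝ≥0∞) ^ s * p ^ s) := by
          rw [Finset.sum_const, nsmul_eq_mul]
          congr 1
          rw [hPdef, Finset.card_powersetCard]
          simp
  refine hbound.trans ?_
  -- convert to a real inequality
  have hπ : (0:ℝ) ≤ α / (n : ℝ) ^ (r - 1) := by positivity
  have hps : p ^ s = ENNReal.ofReal ((α / (n : ℝ) ^ (r - 1)) ^ s) := by
    rw [hp, ENNReal.ofReal_pow hπ]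
  have hc1 : (n.choose t : ℝ≥0∞) = ENNReal.ofReal (n.choose t : ℝ) := by
    rw [ENNReal.ofReal_natCast]
  have hc2 : ((2 * t).choose (r - 1) : ℝ≥0∞) ^ s =
      ENNReal.ofReal (((2 * t).choose (r - 1) : ℝ) ^ s) := by
    rw [ENNReal.ofReal_pow (by positivity), ENNReal.ofReal_natCast]
  rw [hps, hc1, hc2, ← ENNReal.ofReal_mul (by positivity), ← ENNReal.ofReal_mul (by positivity)]
  exact ENNReal.ofReal_le_ofReal (real_bound hr ht1 hn hα ht2 hs2)
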